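/- Let K be a field with nonarchimedean valuation ν and let f = c(y - r_1)⋯(y - r_d) be a polynomial over K with all roots r_i ∈ K*. Then for each j, the valuation of the coefficient of y^{d-j} in f is at least ν(c) plus the sum of the j smallest values among ν(r_1), …, ν(r_d); and equality holds for the j at which the sorted valuation sequence strictly increases. -/

import Mathlib

section Aux

variable {K : Type*} [Field K] {ν : K → ℝ}

lemma nu_one (hmul : ∀ a b : K, a ≠ 0 → b ≠ 0 → ν (a * b) = ν a + ν b) : ν (1 : K) = 0 := by
  have := hmul 1 1 one_ne_zero one_ne_zero
  simp at this
  linarith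

lemma nu_neg_one (hmul : ∀ a b : K, a ≠ 0 → b ≠ 0 → ν (a * b) = ν a + ν b) :
    ν (-1 : K) = 0 := by
  have h := hmul (-1) (-1) (by norm_num) (by norm_num)
  simp only [neg_mul, one_mul, neg_neg] at h
  have h1 := nu_one hmul
  linarith

lemma nu_neg (hmul : ∀ a b : K, a ≠ 0 → b ≠ 0 → ν (a * b) = ν a + ν b) {a : K} (ha : a ≠ 0) :
    ν (-a) = ν a := by
  have := hmul (-1) a (by norm_num) ha
  rw [neg_one_mul] at this
  rw [this, nu_neg_one hmul]; ring

lemma nu_add_eq_left (hmul : ∀ a b : K, a ≠ 0 → b ≠ 0 → ν (a * b) = ν a + ν b)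
    (hadd : ∀ a b : K, a ≠ 0 → b ≠ 0 → a + b ≠ 0 → min (ν a) (ν b) ≤ ν (a + b))
    {a b : K} (ha : a ≠ 0) (hb : b ≠ 0) (hlt : ν a < ν b) :
    a + b ≠ 0 ∧ ν (a + b) = ν a := by
  have hne : a + b ≠ 0 := by
    intro h
    have hba : b = -a := by
      have := eq_neg_of_add_eq_zero_left h
      rw [this, neg_neg]
    rw [hba, nu_neg hmul ha] at hlt
    exact lt_irrefl _ hlt
  refine ⟨hne, le_antisymm ?_ ?_⟩
  · -- a = (a+b) + (-b)
    have hkey := hadd (a + b) (-b) hne (neg_ne_zero.mpr hb) (by simpa using ha)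
    rw [add_neg_cancel_right, nu_neg hmul hb] at hkey
    rcases min_le_iff.mp (le_of_eq rfl : min (ν (a+b)) (ν b) ≤ _) with h | h
    · rcases le_total (ν (a + b)) (ν b) with hh | hh
      · rwa [min_eq_left hh] at hkey
      · rw [min_eq_right hh] at hkey; linarith
    · rcases le_total (ν (a + b)) (ν b) with hh | hh
      · rwa [min_eq_left hh] at hkey
      · rw [min_eq_right hh] at hkey; linarith
  · have := hadd a b ha hb hne
    rw [min_eq_left hlt.le] at this
    exact this

lemma nu_sum_le {ι : Type*} (hadd : ∀ a b : K, a ≠ 0 → b ≠ 0 → a + b ≠ 0 → min (ν a) (ν b) ≤ ν (a + b))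
    (s : Finset ι) (f : ι → K) (B : ℝ) (h0 : ∀ i ∈ s, f i ≠ 0)
    (hB : ∀ i ∈ s, B ≤ ν (f i)) :
    (∑ i ∈ s, f i) = 0 ∨ B ≤ ν (∑ i ∈ s, f i) := by
  classical
  induction s using Finset.induction_on with
  | empty => simp
  | insert _ _ hnotmem ih =>
    rename_i a t
    rw [Finset.sum_insert hnotmem]
    have ha0 : f a ≠ 0 := h0 a (Finset.mem_insert_self a t)
    have haB : B ≤ ν (f a) := hB a (Finset.mem_insert_self a t)
    by_cases hz : (∑ i ∈ t, f i) = 0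
    · rw [hz, add_zero]; exact Or.inr haB
    · rcases ih (fun i hi => h0 i (Finset.mem_insert_of_mem hi))
          (fun i hi => hB i (Finset.mem_insert_of_mem hi)) with h | h
      · exact absurd h hz
      · by_cases hsum : f a + ∑ i ∈ t, f i = 0
        · exact Or.inl hsum
        · exact Or.inr (le_trans (le_min haB h) (hadd _ _ ha0 hz hsum))

lemma nu_sum_lt {ι : Type*} (hadd : ∀ a b : K, a ≠ 0 → b ≠ 0 → a + b ≠ 0 → min (ν a) (ν b) ≤ ν (a + b))
    (s : Finset ι) (f : ι → K) (B : ℝ) (h0 : ∀ i ∈ s, f i ≠ 0)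
    (hB : ∀ i ∈ s, B < ν (f i)) :
    (∑ i ∈ s, f i) = 0 ∨ B < ν (∑ i ∈ s, f i) := by
  classical
  induction s using Finset.induction_on with
  | empty => simp
  | insert _ _ hnotmem ih =>
    rename_i a t
    rw [Finset.sum_insert hnotmem]
    have ha0 : f a ≠ 0 := h0 a (Finset.mem_insert_self a t)
    have haB : B < ν (f a) := hB a (Finset.mem_insert_self a t)
    by_cases hz : (∑ i ∈ t, f i) = 0
    · rw [hz, add_zero]; exact Or.inr haB
    · rcases ih (fun i hi => h0 i (Finset.mem_insert_of_mem hi))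
          (fun i hi => hB i (Finset.mem_insert_of_mem hi)) with h | h
      · exact absurd h hz
      · by_cases hsum : f a + ∑ i ∈ t, f i = 0
        · exact Or.inl hsum
        · exact Or.inr (lt_of_lt_of_le (lt_min haB h) (hadd _ _ ha0 hz hsum))

lemma nu_sum_eq {ι : Type*} [DecidableEq ι]
    (hmul : ∀ a b : K, a ≠ 0 → b ≠ 0 → ν (a * b) = ν a + ν b)
    (hadd : ∀ a b : K, a ≠ 0 → b ≠ 0 → a + b ≠ 0 → min (ν a) (ν b) ≤ ν (a + b))
    (s : Finset ι) (f : ι → K) {a : ι} (has : a ∈ s)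
    (h0 : ∀ i ∈ s, f i ≠ 0)
    (hmin : ∀ i ∈ s, i ≠ a → ν (f a) < ν (f i)) :
    (∑ i ∈ s, f i) ≠ 0 ∧ ν (∑ i ∈ s, f i) = ν (f a) := by
  have hsplit : ∑ i ∈ s, f i = f a + ∑ i ∈ s.erase a, f i := by
    rw [Finset.add_sum_erase _ _ has]
  have ha0 : f a ≠ 0 := h0 a has
  by_cases hz : (∑ i ∈ s.erase a, f i) = 0
  · rw [hsplit, hz, add_zero]; exact ⟨ha0, rfl⟩
  · rcases nu_sum_lt hadd (s.erase a) f (ν (f a))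
        (fun i hi => h0 i (Finset.mem_of_mem_erase hi))
        (fun i hi => hmin i (Finset.mem_of_mem_erase hi) (Finset.ne_of_mem_erase hi)) with h | h
    · exact absurd h hz
    · obtain ⟨hne, heq⟩ := nu_add_eq_left hmul hadd ha0 hz h
      rw [hsplit]; exact ⟨hne, heq⟩

lemma nu_prod {ι : Type*} (hmul : ∀ a b : K, a ≠ 0 → b ≠ 0 → ν (a * b) = ν a + ν b)
    (s : Finset ι) (f : ι → K) (h0 : ∀ i ∈ s, f i ≠ 0) :
    ν (∏ i ∈ s, f i) = ∑ i ∈ s, ν (f i) := by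
  classical
  induction s using Finset.induction_on with
  | empty => simpa using nu_one hmul
  | insert _ _ hnotmem ih =>
    rename_i a t
    rw [Finset.prod_insert hnotmem, Finset.sum_insert hnotmem,
      hmul _ _ (h0 a (Finset.mem_insert_self a t))
        (Finset.prod_ne_zero_iff.mpr fun i hi => h0 i (Finset.mem_insert_of_mem hi)),
      ih (fun i hi => h0 i (Finset.mem_insert_of_mem hi))]

lemma strictMono_fin_le {j d : ℕ} {f : Fin j → Fin d} (hf : StrictMono f) (k : Fin j) :
    (k : ℕ) ≤ (f k : ℕ) := by
  obtain ⟨k, hk⟩ := k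
  induction k with
  | zero => exact Nat.zero_le _
  | succ n ih =>
    have hn : n < j := Nat.lt_of_succ_lt hk
    have h1 : f ⟨n, hn⟩ < f ⟨n + 1, hk⟩ := hf (by simp [Fin.lt_def])
    have h2 := ih hn
    rw [Fin.lt_def] at h1
    simp only at h1 h2 ⊢
    omega

end Aux

/-- Newton polygon of a factored polynomial `f = c (y - r₁) ⋯ (y - r_d)`: the valuation of
the coefficient of `y^(d-j)` is at least `ν(c)` plus the sum of the `j` smallest root
valuations, with equality at the indices `j` where the sorted valuation sequence strictly
increases (i.e. where the minimizing subset of roots is unique). -/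
theorem newton_polygon_of_factorization {K : Type*} [Field K] (ν : K → ℝ)
    (hmul : ∀ a b : K, a ≠ 0 → b ≠ 0 → ν (a * b) = ν a + ν b)
    (hadd : ∀ a b : K, a ≠ 0 → b ≠ 0 → a + b ≠ 0 → min (ν a) (ν b) ≤ ν (a + b))
    (d : ℕ) (c : K) (hc : c ≠ 0) (r : Fin d → K) (hr : ∀ i, r i ≠ 0)
    (σ : Equiv.Perm (Fin d)) (hσ : Monotone fun i => ν (r (σ i))) :
    let P : Polynomial K := Polynomial.C c * ∏ i, (Polynomial.X - Polynomial.C (r i))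
    (∀ j : ℕ, j ≤ d → P.coeff (d - j) ≠ 0 →
      ν c + ∑ i ∈ Finset.univ.filter (fun i : Fin d => (i : ℕ) < j), ν (r (σ i)) ≤
        ν (P.coeff (d - j))) ∧
    (∀ j : ℕ, j ≤ d →
      (∀ i i' : Fin d, (i : ℕ) < j → j ≤ (i' : ℕ) → ν (r (σ i)) < ν (r (σ i'))) →
      P.coeff (d - j) ≠ 0 ∧
        ν (P.coeff (d - j)) =
          ν c + ∑ i ∈ Finset.univ.filter (fun i : Fin d => (i : ℕ) < j), ν (r (σ i))) := by
  intro P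
  classical
  set g : Fin d → ℝ := fun i => ν (r (σ i)) with hgdef
  set F : ℕ → Finset (Fin d) := fun j => Finset.univ.filter (fun i : Fin d => (i : ℕ) < j)
    with hFdef
  -- the coefficient formula
  have hcoeff : ∀ j : ℕ, j ≤ d →
      P.coeff (d - j) = (c * (-1 : K) ^ j) *
        ∑ t ∈ Finset.powersetCard j (Finset.univ : Finset (Fin d)), ∏ i ∈ t, r (σ i) := by
    intro j hj
    have h1 : P = Polynomial.C c * ∏ i, (Polynomial.X + Polynomial.C (-(r i))) := by
      simp [P, sub_eq_add_neg]
    rw [h1, Polynomial.coeff_C_mul,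
      Finset.prod_X_add_C_coeff (Finset.univ : Finset (Fin d)) (fun i => -(r i))
        (by simp only [Finset.card_univ, Fintype.card_fin]; omega)]
    have hcard : (Finset.univ : Finset (Fin d)).card - (d - j) = j := by
      simp only [Finset.card_univ, Fintype.card_fin]; omega
    rw [hcard]
    have hterm : ∀ t ∈ Finset.powersetCard j (Finset.univ : Finset (Fin d)),
        ∏ i ∈ t, (-(r i)) = (-1 : K) ^ j * ∏ i ∈ t, r i := by
      intro t ht
      have hct : t.card = j := (Finset.mem_powersetCard.mp ht).2
      calc ∏ i ∈ t, (-(r i)) = ∏ i ∈ t, ((-1 : K) * r i) := by simp only [neg_one_mul]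
        _ = (∏ _i ∈ t, (-1 : K)) * ∏ i ∈ t, r i := Finset.prod_mul_distrib
        _ = (-1 : K) ^ j * ∏ i ∈ t, r i := by rw [Finset.prod_const, hct]
    rw [Finset.sum_congr rfl hterm, ← Finset.mul_sum]
    have hreindex : ∑ t ∈ Finset.powersetCard j (Finset.univ : Finset (Fin d)), ∏ i ∈ t, r i
        = ∑ t ∈ Finset.powersetCard j (Finset.univ : Finset (Fin d)), ∏ i ∈ t, r (σ i) := by
      refine Finset.sum_nbij' (fun t => Finset.image σ.symm t) (fun t => Finset.image σ t)
        ?_ ?_ ?_ ?_ ?_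
      · intro t ht
        refine Finset.mem_powersetCard.mpr ⟨Finset.subset_univ _, ?_⟩
        rw [Finset.card_image_of_injective _ σ.symm.injective]
        exact (Finset.mem_powersetCard.mp ht).2
      · intro t ht
        refine Finset.mem_powersetCard.mpr ⟨Finset.subset_univ _, ?_⟩
        rw [Finset.card_image_of_injective _ σ.injective]
        exact (Finset.mem_powersetCard.mp ht).2
      · intro t _
        simp [Finset.image_image]
      · intro t _
        simp [Finset.image_image]
      · intro t _
        rw [Finset.prod_image (fun x _ y _ h => σ.symm.injective h)]
        simp
    rw [hreindex]
    ring
  -- generic facts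
  have hprodne : ∀ t : Finset (Fin d), (∏ i ∈ t, r (σ i)) ≠ 0 := fun t =>
    Finset.prod_ne_zero_iff.mpr fun i _ => hr _
  have hprodval : ∀ t : Finset (Fin d), ν (∏ i ∈ t, r (σ i)) = ∑ i ∈ t, g i := fun t =>
    nu_prod hmul t _ (fun i _ => hr _)
  have hFimg : ∀ j (hj : j ≤ d), F j = Finset.image (Fin.castLE hj) Finset.univ := by
    intro j hj
    ext i
    simp only [hFdef, Finset.mem_filter, Finset.mem_univ, true_and, Finset.mem_image]
    constructor
    · intro h
      refine ⟨⟨(i : ℕ), h⟩, ?_⟩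
      exact Fin.ext rfl
    · rintro ⟨k, -, rfl⟩
      exact k.2
  have hFcard : ∀ j (hj : j ≤ d), (F j).card = j := by
    intro j hj
    rw [hFimg j hj, Finset.card_image_of_injective _ (Fin.castLE_injective hj),
      Finset.card_univ, Fintype.card_fin]
  have hFmem : ∀ j (hj : j ≤ d),
      F j ∈ Finset.powersetCard j (Finset.univ : Finset (Fin d)) := fun j hj =>
    Finset.mem_powersetCard.mpr ⟨Finset.subset_univ _, hFcard j hj⟩
  -- sum over F j as a sum over Fin j
  have hFsum : ∀ j (hj : j ≤ d), ∑ i ∈ F j, g i = ∑ k : Fin j, g (Fin.castLE hj k) := by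
    intro j hj
    rw [hFimg j hj, Finset.sum_image (fun x _ y _ h => Fin.castLE_injective hj h)]
  -- lower bound: any j-subset has g-sum at least that of F j
  have hlow : ∀ j (hj : j ≤ d), ∀ t ∈ Finset.powersetCard j (Finset.univ : Finset (Fin d)),
      ∑ i ∈ F j, g i ≤ ∑ i ∈ t, g i := by
    intro j hj t ht
    have hct : t.card = j := (Finset.mem_powersetCard.mp ht).2
    set e := t.orderEmbOfFin hct with he
    have himg : Finset.image (⇑e) Finset.univ = t := by
      ext x
      simp only [Finset.mem_image, Finset.mem_univ, true_and]
      constructor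
      · rintro ⟨k, rfl⟩
        exact Finset.orderEmbOfFin_mem t hct k
      · intro hx
        have hx' : x ∈ Set.range ⇑e := by
          rw [he, Finset.range_orderEmbOfFin]; exact hx
        obtain ⟨k, hk⟩ := hx'
        exact ⟨k, hk⟩
    rw [← himg, Finset.sum_image (fun x _ y _ h => e.injective h), hFsum j hj]
    refine Finset.sum_le_sum fun k _ => ?_
    refine hσ ?_
    rw [Fin.le_def]
    exact strictMono_fin_le e.strictMono k
  -- strict bound
  have hstrictlow : ∀ j (hj : j ≤ d),
      (∀ i i' : Fin d, (i : ℕ) < j → j ≤ (i' : ℕ) → ν (r (σ i)) < ν (r (σ i'))) →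
      ∀ t ∈ Finset.powersetCard j (Finset.univ : Finset (Fin d)), t ≠ F j →
      ∑ i ∈ F j, g i < ∑ i ∈ t, g i := by
    intro j hj hstrict t ht htne
    have hct : t.card = j := (Finset.mem_powersetCard.mp ht).2
    set e := t.orderEmbOfFin hct with he
    have himg : Finset.image (⇑e) Finset.univ = t := by
      ext x
      simp only [Finset.mem_image, Finset.mem_univ, true_and]
      constructor
      · rintro ⟨k, rfl⟩
        exact Finset.orderEmbOfFin_mem t hct k
      · intro hx
        have hx' : x ∈ Set.range ⇑e := by
          rw [he, Finset.range_orderEmbOfFin]; exact hx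
        obtain ⟨k, hk⟩ := hx'
        exact ⟨k, hk⟩
    have hex : ∃ k : Fin j, j ≤ ((e k : Fin d) : ℕ) := by
      by_contra hall
      push_neg at hall
      apply htne
      apply Finset.eq_of_subset_of_card_le
      · intro x hx
        rw [← himg] at hx
        obtain ⟨k, -, rfl⟩ := Finset.mem_image.mp hx
        simp only [hFdef, Finset.mem_filter, Finset.mem_univ, true_and]
        exact hall k
      · rw [hFcard j hj, hct]
    obtain ⟨k₀, hk₀⟩ := hex
    rw [← himg, Finset.sum_image (fun x _ y _ h => e.injective h), hFsum j hj]
    refine Finset.sum_lt_sum (fun k _ => ?_) ⟨k₀, Finset.mem_univ _, ?_⟩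
    · refine hσ ?_
      rw [Fin.le_def]
      exact strictMono_fin_le e.strictMono k
    · exact hstrict (Fin.castLE hj k₀) (e k₀) k₀.2 hk₀
  -- the scalar c * (-1)^j
  have hu0 : ∀ j : ℕ, c * (-1 : K) ^ j ≠ 0 := fun j =>
    mul_ne_zero hc (pow_ne_zero _ (by norm_num))
  have hu : ∀ j : ℕ, ν (c * (-1 : K) ^ j) = ν c := by
    intro j
    rcases Nat.even_or_odd j with h | h
    · rw [h.neg_one_pow, mul_one]
    · rw [h.neg_one_pow, mul_neg_one, nu_neg hmul hc]
  constructor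
  · intro j hj hne
    rw [hcoeff j hj] at hne ⊢
    set E := ∑ t ∈ Finset.powersetCard j (Finset.univ : Finset (Fin d)), ∏ i ∈ t, r (σ i)
      with hE
    have hE0 : E ≠ 0 := by
      intro h
      rw [h, mul_zero] at hne
      exact hne rfl
    rw [hmul _ _ (hu0 j) hE0, hu j]
    have hlowE := nu_sum_le hadd _ _ (∑ i ∈ F j, g i) (fun t _ => hprodne t)
      (fun t ht => by rw [hprodval t]; exact hlow j hj t ht)
    rcases hlowE with h | h
    · exact absurd h hE0
    · exact (add_le_add_iff_left _).mpr h
  · intro j hj hstrict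
    rw [hcoeff j hj]
    have hkey := nu_sum_eq hmul hadd (Finset.powersetCard j (Finset.univ : Finset (Fin d)))
      (fun t => ∏ i ∈ t, r (σ i)) (hFmem j hj) (fun t _ => hprodne t)
      (fun t ht htne => by
        rw [hprodval t, hprodval (F j)]
        exact hstrictlow j hj hstrict t ht htne)
    obtain ⟨hE0, hEval⟩ := hkey
    refine ⟨mul_ne_zero (hu0 j) hE0, ?_⟩
    rw [hmul _ _ (hu0 j) hE0, hu j, hEval, hprodval (F j)]
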